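/- Let G be a finite group, C a union of G-conjugacy classes, m the exponent of G (the lcm of the orders of elements of G), and K a field with ℚ ≤ K ≤ ℚ(ζ_m). Then every eigenvalue of Cay(G,C) lies in K if and only if C is a union of Γ_K-conjugacy classes. -/

import Mathlib

noncomputable section
open IntermediateField

/-- The adjacency matrix of the Cayley digraph `Cay(G, C)`. -/
def cayleyAdj {G : Type*} [Group G] [Fintype G] [DecidableEq G] (C : Finset G) :
    Matrix G G ℂ := fun g h => if g * h⁻¹ ∈ C then 1 else 0

/-- `t` lies in `Γ_K`: there is an automorphism of `ℚ(ζ)` fixing `K` pointwise and sending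
`ζ` to `ζ ^ t`. -/
def GammaK (ζ : ℂ) (K : IntermediateField ℚ ℂ) (t : ℕ) : Prop :=
  ∃ σ : ℚ⟮ζ⟯ ≃ₐ[ℚ] ℚ⟮ζ⟯,
    (∀ (x : ℂ) (hx : x ∈ ℚ⟮ζ⟯), x ∈ K → (σ ⟨x, hx⟩ : ℂ) = x) ∧
    (σ ⟨ζ, IntermediateField.mem_adjoin_simple_self ℚ ζ⟩ : ℂ) = ζ ^ t

/-- `g` and `h` are `Γ_K`-conjugate if `g` is conjugate in `G` to `h ^ t` for some `t ∈ Γ_K`. -/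
def GammaConj {G : Type*} [Group G] (ζ : ℂ) (K : IntermediateField ℚ ℂ) (g h : G) : Prop :=
  ∃ t : ℕ, GammaK ζ K t ∧ IsConj g (h ^ t)

namespace CayleyAux

universe u
variable {G : Type u} [Group G] [Fintype G] [DecidableEq G]

open MonoidAlgebra

/-- transfer ring equiv to fix universe issue in Maschke -/
def uliftHom : MonoidAlgebra (ULift.{u} ℂ) G →+* MonoidAlgebra ℂ G :=
  liftNCRingHom (singleOneRingHom.comp (ULift.ringEquiv (R := ℂ)).toRingHom) (of ℂ G)
    (fun x y => by
      show single (1:G) (ULift.ringEquiv x) * single y 1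
          = single y 1 * single (1:G) (ULift.ringEquiv x)
      rw [single_mul_single, single_mul_single, one_mul, mul_one, one_mul, mul_one])

def uliftHomInv : MonoidAlgebra ℂ G →+* MonoidAlgebra (ULift.{u} ℂ) G :=
  liftNCRingHom (singleOneRingHom.comp (ULift.ringEquiv (R := ℂ)).symm.toRingHom) (of _ G)
    (fun x y => by
      show single (1:G) (ULift.ringEquiv.symm x) * single y 1
          = single y 1 * single (1:G) (ULift.ringEquiv.symm x)
      rw [single_mul_single, single_mul_single, one_mul, mul_one, one_mul, mul_one])

lemma uliftHom_single (g : G) (c : ULift.{u} ℂ) :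
    uliftHom (single g c) = single g c.down := by
  show liftNC _ _ _ = _
  rw [liftNC_single]
  show single 1 c.down * single g 1 = single g c.down
  rw [single_mul_single, one_mul, mul_one]

lemma uliftHomInv_single (g : G) (c : ℂ) :
    uliftHomInv (single g c) = single g (ULift.up c) := by
  show liftNC _ _ _ = _
  rw [liftNC_single]
  show single 1 (ULift.up c) * single g 1 = single g (ULift.up c)
  rw [single_mul_single, one_mul, mul_one]

lemma uliftHom_comp_inv :
    (uliftHom (G := G)).comp uliftHomInv = RingHom.id (MonoidAlgebra ℂ G) := by
  apply MonoidAlgebra.ringHom_ext <;> intro b <;>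
    rw [RingHom.comp_apply, uliftHomInv_single, uliftHom_single, RingHom.id_apply]

lemma uliftHomInv_comp :
    (uliftHomInv (G := G)).comp uliftHom = RingHom.id (MonoidAlgebra (ULift.{u} ℂ) G) := by
  apply MonoidAlgebra.ringHom_ext <;> intro b <;>
    rw [RingHom.comp_apply, uliftHom_single, uliftHomInv_single, RingHom.id_apply]

def uliftEquiv : MonoidAlgebra (ULift.{u} ℂ) G ≃+* MonoidAlgebra ℂ G :=
  RingEquiv.ofRingHom uliftHom uliftHomInv uliftHom_comp_inv uliftHomInv_comp

instance : IsSemisimpleRing (MonoidAlgebra ℂ G) := by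
  haveI : NeZero ((Fintype.card G : ULift.{u} ℂ)) := by
    constructor
    intro h
    have := congrArg (ULift.ringEquiv (R := ℂ)) h
    rw [map_natCast, map_zero] at this
    exact Nat.cast_ne_zero.mpr Fintype.card_ne_zero this
  haveI : NeZero ((Nat.card G : ℂ)) := ⟨Nat.cast_ne_zero.mpr Nat.card_pos.ne'⟩
  infer_instance

/-! ### regular representation -/

def permMat (g : G) : Matrix G G ℂ := fun h k => if h * k⁻¹ = g then 1 else 0

def permHom : G →* Matrix G G ℂ where
  toFun := permMat
  map_one' := by
    ext h k
    simp [permMat, Matrix.one_apply, mul_inv_eq_one]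
  map_mul' g₁ g₂ := by
    ext h k
    simp only [permMat, Matrix.mul_apply]
    rw [Finset.sum_eq_single (g₂ * k)]
    · rw [show g₂ * k * k⁻¹ = g₂ from mul_inv_cancel_right g₂ k, if_pos rfl, mul_one]
      by_cases hc : h * k⁻¹ = g₁ * g₂
      · rw [if_pos hc, if_pos (by rw [mul_inv_rev, ← mul_assoc, hc, mul_inv_cancel_right])]
      · rw [if_neg hc, if_neg]
        intro hcon
        apply hc
        rw [← hcon, mul_inv_rev, ← mul_assoc, inv_mul_cancel_right]
    · intro j _ hj
      have hne : ¬ (j * k⁻¹ = g₂) := fun hjk => hj (by rw [← hjk, inv_mul_cancel_right])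
      rw [if_neg hne, mul_zero]
    · intro h'; exact absurd (Finset.mem_univ _) h'

def Phi : MonoidAlgebra ℂ G →ₐ[ℂ] Matrix G G ℂ :=
  MonoidAlgebra.lift ℂ (Matrix G G ℂ) G permHom

lemma Phi_single (g : G) (c : ℂ) : Phi (single g c) = c • permMat g := by
  show MonoidAlgebra.lift ℂ (Matrix G G ℂ) G permHom (single g c) = _
  rw [MonoidAlgebra.lift_single]
  rfl

lemma Phi_apply (x : MonoidAlgebra ℂ G) (h k : G) : Phi x h k = x.coeff (h * k⁻¹) := by
  induction x using MonoidAlgebra.induction_linear with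
  | zero => simp
  | add f g hf hg => rw [map_add, MonoidAlgebra.coeff_add, Finsupp.add_apply, ← hf, ← hg]; rfl
  | single g c =>
    rw [Phi_single]
    simp only [Matrix.smul_apply, permMat, MonoidAlgebra.coeff_single, Finsupp.single_apply,
      smul_eq_mul]
    by_cases hgc : h * k⁻¹ = g
    · rw [if_pos hgc, if_pos hgc.symm, mul_one]
    · rw [if_neg hgc, if_neg (fun hgg => hgc hgg.symm), mul_zero]

lemma isUnit_of_phi (x : MonoidAlgebra ℂ G) (hx : ∀ y, x * y = y * x)
    (h : IsUnit (Phi x)) : IsUnit x := by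
  obtain ⟨u, hu⟩ := h
  set B := (↑u⁻¹ : Matrix G G ℂ) with hB
  set w : MonoidAlgebra ℂ G := ∑ k : G, single k (B k 1) with hw
  have hxw : x * w = 1 := by
    ext u0
    rw [hw, Finset.mul_sum]
    rw [MonoidAlgebra.coeff_sum, Finset.sum_apply']
    have : ∀ k : G, (x * single k (B k 1)).coeff u0 = Phi x u0 k * B k 1 := by
      intro k
      rw [MonoidAlgebra.coeff_mul_single_apply, Phi_apply]
    rw [Finset.sum_congr rfl fun k _ => this k]
    have : ∑ k : G, Phi x u0 k * B k 1 = (Phi x * B) u0 1 := by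
      rw [Matrix.mul_apply]
    rw [this, hB, ← hu, Units.mul_inv]
    rw [Matrix.one_apply]
    show _ = (MonoidAlgebra.single (1 : G) (1 : ℂ)).coeff u0
    rw [MonoidAlgebra.coeff_single, Finsupp.single_apply]
    simp [eq_comm]
  exact ⟨⟨x, w, hxw, by rw [← hx w, hxw]⟩, rfl⟩

lemma spectrum_phi (x : MonoidAlgebra ℂ G) (hx : ∀ y, x * y = y * x) :
    spectrum ℂ (Phi x) = spectrum ℂ x := by
  ext μ
  rw [spectrum.mem_iff, spectrum.mem_iff]
  have key : algebraMap ℂ (Matrix G G ℂ) μ - Phi x = Phi (algebraMap ℂ _ μ - x) := by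
    rw [map_sub, AlgHom.commutes]
  rw [key]
  constructor
  · intro hnu hu
    exact hnu (hu.map (Phi (G := G)))
  · intro hnu hu
    refine hnu (isUnit_of_phi _ (fun y => ?_) hu)
    rw [sub_mul, mul_sub, hx y, Algebra.commutes]



/-! ### action on a submodule, trace, characters -/

instance : FiniteDimensional ℂ (MonoidAlgebra ℂ G) :=
  Module.Finite.equiv
    ((Finsupp.linearEquivFunOnFinite ℂ ℂ G).symm.trans (MonoidAlgebra.coeffLinearEquiv ℂ).symm)

variable (S : Submodule (MonoidAlgebra ℂ G) (MonoidAlgebra ℂ G))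

def actL : MonoidAlgebra ℂ G →ₗ[ℂ] Module.End ℂ ↥(S.restrictScalars ℂ) where
  toFun z := (LinearMap.mulLeft ℂ z).restrict
      (p := S.restrictScalars ℂ) (q := S.restrictScalars ℂ)
      (fun x hx => S.smul_mem z hx)
  map_add' z w := by
    refine LinearMap.ext fun s => Subtype.ext ?_
    show (z + w) * (s : MonoidAlgebra ℂ G) = z * s + w * s
    simp only [LinearMap.coe_restrict_apply, LinearMap.mulLeft_apply, LinearMap.add_apply,
      Submodule.coe_add, add_mul]
  map_smul' c z := by
    refine LinearMap.ext fun s => Subtype.ext ?_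
    show (c • z) * (s : MonoidAlgebra ℂ G) = c • (z * s)
    simp only [LinearMap.coe_restrict_apply, LinearMap.mulLeft_apply, LinearMap.smul_apply,
      RingHom.id_apply, SetLike.val_smul, smul_mul_assoc]

lemma actL_coe (z : MonoidAlgebra ℂ G) (s : ↥(S.restrictScalars ℂ)) :
    (actL S z s : MonoidAlgebra ℂ G) = z * ↑s := rfl

lemma actL_one : actL S 1 = 1 := by
  refine LinearMap.ext fun s => Subtype.ext ?_
  rw [actL_coe]
  simp only [one_mul, Module.End.one_apply]

lemma actL_mul (z w : MonoidAlgebra ℂ G) : actL S (z * w) = actL S z * actL S w := by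
  refine LinearMap.ext fun s => Subtype.ext ?_
  rw [actL_coe, Module.End.mul_apply, actL_coe, actL_coe, mul_assoc]

lemma actL_pow (z : MonoidAlgebra ℂ G) (t : ℕ) : actL S (z ^ t) = (actL S z) ^ t := by
  induction t with
  | zero => rw [pow_zero, pow_zero, actL_one]
  | succ t ih => rw [pow_succ, pow_succ, actL_mul, ih]

def tauS : MonoidAlgebra ℂ G →ₗ[ℂ] ℂ :=
  (LinearMap.trace ℂ ↥(S.restrictScalars ℂ)).comp (actL S)

def chiS (g : G) : ℂ := tauS S (MonoidAlgebra.single g 1)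

lemma tau_of_scalar (z : MonoidAlgebra ℂ G) (μ : ℂ) (hsc : ∀ s ∈ S, z * s = μ • s) :
    tauS S z = μ * (Module.finrank ℂ ↥(S.restrictScalars ℂ)) := by
  have hact : actL S z = μ • (1 : Module.End ℂ ↥(S.restrictScalars ℂ)) := by
    refine LinearMap.ext fun s => Subtype.ext ?_
    rw [actL_coe]
    have := hsc s.1 s.2
    rw [this]
    simp only [LinearMap.smul_apply, Module.End.one_apply, SetLike.val_smul]
  rw [tauS, LinearMap.comp_apply, hact, map_smul, LinearMap.trace_one, smul_eq_mul]

/-- Schur: a central element acts on a simple submodule by a scalar. -/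
lemma exists_scalar (hS : IsSimpleModule (MonoidAlgebra ℂ G) ↥S)
    (z : MonoidAlgebra ℂ G) (hz : ∀ y, z * y = y * z) :
    ∃ μ : ℂ, ∀ s ∈ S, z * s = μ • s := by
  haveI := hS
  haveI : Nontrivial ↥S := IsSimpleModule.nontrivial (MonoidAlgebra ℂ G) ↥S
  obtain ⟨s₀, hs₀⟩ := exists_ne (0 : ↥S)
  haveI : Nontrivial ↥(S.restrictScalars ℂ) := by
    refine ⟨⟨s₀.1, s₀.2⟩, 0, fun hcon => hs₀ ?_⟩
    have : s₀.1 = 0 := congrArg Subtype.val hcon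
    exact Subtype.ext this
  obtain ⟨μ, hμ⟩ := Module.End.exists_eigenvalue (actL S z)
  obtain ⟨v, hv⟩ := hμ.exists_hasEigenvector
  have hvact : z * (v : MonoidAlgebra ℂ G) = μ • (v : MonoidAlgebra ℂ G) := by
    have := hv.apply_eq_smul
    have h2 := congrArg Subtype.val this
    rw [actL_coe] at h2
    exact h2
  set N : Submodule (MonoidAlgebra ℂ G) ↥S :=
    { carrier := {s | z * ↑s = μ • (↑s : MonoidAlgebra ℂ G)}
      zero_mem' := by simp
      add_mem' := fun {x y} hx hy => by
        show z * ↑(x + y) = μ • (↑(x + y) : MonoidAlgebra ℂ G)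
        rw [Submodule.coe_add, mul_add, hx, hy, smul_add]
      smul_mem' := fun r x hx => by
        show z * ↑(r • x) = μ • (↑(r • x) : MonoidAlgebra ℂ G)
        have hx' : z * ↑x = μ • (↑x : MonoidAlgebra ℂ G) := hx
        rw [Submodule.coe_smul, smul_eq_mul, ← mul_assoc, hz r, mul_assoc, hx',
          mul_smul_comm] } with hNdef
  have hvN : (⟨v.1, v.2⟩ : ↥S) ∈ N := hvact
  have hNbot : N ≠ ⊥ := by
    intro hbot
    rw [hbot, Submodule.mem_bot] at hvN
    exact hv.right (by
      have := congrArg Subtype.val hvN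
      exact Subtype.ext this)
  rcases eq_bot_or_eq_top N with h | h
  · exact absurd h hNbot
  · refine ⟨μ, fun s hs => ?_⟩
    have : (⟨s, hs⟩ : ↥S) ∈ N := h ▸ Submodule.mem_top
    exact this

lemma mem_spectrum_of_scalar (hS : IsSimpleModule (MonoidAlgebra ℂ G) ↥S)
    (z : MonoidAlgebra ℂ G) (μ : ℂ) (hsc : ∀ s ∈ S, z * s = μ • s) :
    μ ∈ spectrum ℂ z := by
  haveI := hS
  haveI : Nontrivial ↥S := IsSimpleModule.nontrivial (MonoidAlgebra ℂ G) ↥S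
  obtain ⟨s₀, hs₀⟩ := exists_ne (0 : ↥S)
  have hs₀' : (s₀ : MonoidAlgebra ℂ G) ≠ 0 := fun h => hs₀ (Subtype.ext h)
  rw [spectrum.mem_iff]
  intro hu
  obtain ⟨u, hu⟩ := hu
  have hzero : (algebraMap ℂ (MonoidAlgebra ℂ G) μ - z) * ↑s₀ = 0 := by
    rw [sub_mul, hsc s₀.1 s₀.2, Algebra.smul_def, sub_self]
  have := congrArg (fun y => (↑u⁻¹ : MonoidAlgebra ℂ G) * y) hzero
  simp only [← mul_assoc, ← hu, Units.inv_mul, one_mul, mul_zero] at this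
  exact hs₀' this

lemma exists_simple_of_nonunit (z : MonoidAlgebra ℂ G) (hz : ∀ y, z * y = y * z)
    (hnu : ¬ IsUnit z) :
    ∃ T : Submodule (MonoidAlgebra ℂ G) (MonoidAlgebra ℂ G),
      IsSimpleModule (MonoidAlgebra ℂ G) ↥T ∧ ∀ s ∈ T, z * s = 0 := by
  by_contra hcon
  push_neg at hcon
  set f : MonoidAlgebra ℂ G →ₗ[MonoidAlgebra ℂ G] MonoidAlgebra ℂ G :=
    { toFun := fun r => z * r
      map_add' := mul_add z
      map_smul' := fun r x => by
        simp only [smul_eq_mul, RingHom.id_apply, ← mul_assoc, hz r] } with hfdef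
  have hrange : ∀ T ∈ {m : Submodule (MonoidAlgebra ℂ G) (MonoidAlgebra ℂ G) |
      IsSimpleModule (MonoidAlgebra ℂ G) ↥m}, T ≤ LinearMap.range f := by
    intro T hT s hsT
    obtain ⟨μ, hμ⟩ := exists_scalar T hT z hz
    have hμ0 : μ ≠ 0 := by
      rintro rfl
      obtain ⟨s₁, hs₁T, hs₁⟩ := hcon T hT
      exact hs₁ (by rw [hμ s₁ hs₁T, zero_smul])
    refine ⟨μ⁻¹ • s, ?_⟩
    show z * (μ⁻¹ • s) = s
    rw [mul_smul_comm, hμ s hsT, smul_smul, inv_mul_cancel₀ hμ0, one_smul]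
  have htop : ⊤ ≤ LinearMap.range f := by
    rw [← IsSemisimpleModule.sSup_simples_eq_top (MonoidAlgebra ℂ G) (MonoidAlgebra ℂ G)]
    exact sSup_le hrange
  obtain ⟨w, hw⟩ := htop (Submodule.mem_top (x := (1 : MonoidAlgebra ℂ G)))
  have hw' : z * w = 1 := hw
  exact hnu ⟨⟨z, w, hw', by rw [← hz w, hw']⟩, rfl⟩

/-- class functions are central -/
lemma central_of_classfun (z : MonoidAlgebra ℂ G)
    (hcf : ∀ k g : G, z.coeff (k * g * k⁻¹) = z.coeff g) : ∀ y, z * y = y * z := by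
  intro y
  induction y using MonoidAlgebra.induction_linear with
  | zero => rw [mul_zero, zero_mul]
  | add f g hf hg => rw [mul_add, add_mul, hf, hg]
  | single k c =>
    ext u
    rw [MonoidAlgebra.coeff_mul_single_apply, MonoidAlgebra.coeff_single_mul_apply]
    have : z.coeff (u * k⁻¹) = z.coeff (k⁻¹ * u) := by
      have h2 := hcf k⁻¹ (u * k⁻¹)
      rw [inv_inv] at h2
      rw [← h2]
      congr 1
      group
    rw [this, mul_comm]

lemma sum_single_apply (D : Finset G) (u : G) :
    (∑ g ∈ D, MonoidAlgebra.single g (1:ℂ)).coeff u = if u ∈ D then 1 else 0 := by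
  rw [MonoidAlgebra.coeff_sum, Finset.sum_apply']
  simp only [MonoidAlgebra.coeff_single]
  rw [Finset.sum_congr rfl (fun g _ => Finsupp.single_apply)]
  rw [Finset.sum_ite_eq' D u (fun _ => (1:ℂ))]


/-! ### trace of powers via eigenspaces -/

lemma pow_eigen {V : Type*} [AddCommGroup V] [Module ℂ V] (f : Module.End ℂ V) (c : ℂ) (v : V)
    (hv : f v = c • v) (t : ℕ) : (f ^ t) v = c ^ t • v := by
  induction t with
  | zero => simp
  | succ t ih =>
    rw [pow_succ, Module.End.mul_apply, hv, map_smul, ih, smul_smul, pow_succ, mul_comm]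

lemma trace_pow (m : ℕ) (hm : 0 < m) (ζ : ℂ) (hζ : IsPrimitiveRoot ζ m)
    {V : Type*} [AddCommGroup V] [Module ℂ V] [FiniteDimensional ℂ V]
    (f : Module.End ℂ V) (hfm : f ^ m = 1) :
    ∀ t : ℕ, LinearMap.trace ℂ V (f ^ t) =
      ∑ j ∈ Finset.range m, (Module.finrank ℂ ↥(f.eigenspace (ζ ^ j)) : ℂ) * ζ ^ (j * t) := by
  have hζ0 : ζ ≠ 0 := by
    intro h
    have := hζ.pow_eq_one
    rw [h, zero_pow hm.ne'] at this
    exact zero_ne_one this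
  set N : Fin m → Submodule ℂ V := fun j => f.eigenspace (ζ ^ (j : ℕ)) with hN
  have hindep : iSupIndep N := (Module.End.eigenspaces_iSupIndep f).comp
      (fun i j hij => Fin.ext (hζ.pow_inj i.isLt j.isLt hij))
  set e : ℕ → Module.End ℂ V :=
    fun j => (m : ℂ)⁻¹ • ∑ i ∈ Finset.range m, ((ζ ^ j)⁻¹) ^ i • f ^ i with he
  have hm0 : (m : ℂ) ≠ 0 := Nat.cast_ne_zero.mpr hm.ne'
  have hsum : ∑ j ∈ Finset.range m, e j = 1 := by
    rw [he]
    beta_reduce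
    rw [← Finset.smul_sum, Finset.sum_comm]
    have key : ∀ i ∈ Finset.range m,
        (∑ j ∈ Finset.range m, ((ζ ^ j)⁻¹) ^ i • f ^ i) =
          (if i = 0 then (m : ℂ) else 0) • f ^ i := by
      intro i hi
      rw [← Finset.sum_smul]
      congr 1
      have hswap : ∀ j : ℕ, ((ζ ^ j)⁻¹) ^ i = ((ζ ^ i)⁻¹) ^ j := by
        intro j; rw [← inv_pow, ← inv_pow, ← pow_mul, ← pow_mul, mul_comm]
      rw [Finset.sum_congr rfl fun j _ => hswap j]
      rcases eq_or_ne i 0 with rfl | hi0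
      · simp
      · have hx1 : ((ζ:ℂ) ^ i)⁻¹ ≠ 1 := by
          rw [ne_eq, inv_eq_one]
          exact hζ.pow_ne_one_of_pos_of_lt hi0 (Finset.mem_range.mp hi)
        have hxm : (((ζ:ℂ) ^ i)⁻¹) ^ m = 1 := by
          rw [inv_pow, ← pow_mul, mul_comm i m, pow_mul, hζ.pow_eq_one, one_pow, inv_one]
        rw [if_neg hi0, geom_sum_eq hx1, hxm, sub_self, zero_div]
    rw [Finset.sum_congr rfl key, Finset.sum_eq_single 0]
    · simp [hm0]
    · intro i _ hi0; rw [if_neg hi0, zero_smul]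
    · intro h; exact absurd (Finset.mem_range.mpr hm) h
  have hfe : ∀ j : ℕ, f * e j = ζ ^ j • e j := by
    intro j
    have hzj : (ζ : ℂ) ^ j ≠ 0 := pow_ne_zero j hζ0
    have hterm : ∀ i : ℕ, f * (((ζ ^ j)⁻¹) ^ i • f ^ i) =
        ζ ^ j • (((ζ ^ j)⁻¹) ^ (i+1) • f ^ (i+1)) := by
      intro i
      rw [mul_smul_comm, smul_smul, pow_succ ((ζ^j)⁻¹), mul_comm (((ζ^j)⁻¹)^i) ((ζ^j)⁻¹),
        ← mul_assoc, mul_inv_cancel₀ hzj, one_mul, ← pow_succ']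
    rw [he]
    beta_reduce
    rw [mul_smul_comm, Finset.mul_sum, smul_comm (ζ ^ j) ((m:ℂ)⁻¹)]
    congr 1
    rw [Finset.sum_congr rfl fun i _ => hterm i, ← Finset.smul_sum]
    congr 1
    have h1 := Finset.sum_range_succ' (fun i => ((ζ ^ j)⁻¹) ^ i • f ^ i) m
    have h2 := Finset.sum_range_succ (fun i => ((ζ ^ j)⁻¹) ^ i • f ^ i) m
    beta_reduce at h1 h2
    have hc1 : ((ζ ^ j)⁻¹ : ℂ) ^ m = 1 := by
      rw [inv_pow, ← pow_mul, mul_comm j m, pow_mul, hζ.pow_eq_one, one_pow, inv_one]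
    have hu : ((ζ ^ j)⁻¹) ^ m • f ^ m = ((ζ ^ j)⁻¹) ^ 0 • f ^ 0 := by
      rw [hc1, hfm, pow_zero, pow_zero]
    rw [h2, hu] at h1
    exact (add_right_cancel h1).symm
  have hsup : ⨆ j, N j = ⊤ := by
    rw [eq_top_iff]
    intro v _
    have hv : v = ∑ j ∈ Finset.range m, e j v := by
      have := congrArg (fun T : Module.End ℂ V => T v) hsum
      simp only [LinearMap.coe_sum, Finset.sum_apply, Module.End.one_apply] at this
      exact this.symm
    rw [hv]
    refine Submodule.sum_mem _ fun j hj => ?_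
    refine Submodule.mem_iSup_of_mem ⟨j, Finset.mem_range.mp hj⟩ ?_
    show e j v ∈ f.eigenspace (ζ ^ j)
    rw [Module.End.mem_eigenspace_iff]
    have := congrArg (fun T : Module.End ℂ V => T v) (hfe j)
    simpa only [Module.End.mul_apply, LinearMap.smul_apply] using this
  have hint : DirectSum.IsInternal N :=
    (DirectSum.isInternal_submodule_iff_iSupIndep_and_iSup_eq_top N).mpr ⟨hindep, hsup⟩
  intro t
  have hmt : ∀ j : Fin m, Set.MapsTo (f ^ t) (N j) (N j) := by
    intro j x hx
    have hx' : f x = ζ ^ (j:ℕ) • x := Module.End.mem_eigenspace_iff.mp hx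
    have hpow : (f ^ t) x = (ζ ^ (j:ℕ)) ^ t • x := pow_eigen f _ x hx' t
    show (f ^ t) x ∈ f.eigenspace (ζ ^ (j:ℕ))
    rw [Module.End.mem_eigenspace_iff, hpow, map_smul, hx', smul_smul, smul_smul, mul_comm]
  rw [LinearMap.trace_eq_sum_trace_restrict hint hmt]
  rw [← Fin.sum_univ_eq_sum_range
    (fun j => (Module.finrank ℂ ↥(f.eigenspace (ζ ^ j)) : ℂ) * ζ ^ (j * t)) m]
  refine Finset.sum_congr rfl fun j _ => ?_
  have hres : (f ^ t).restrict (hmt j) = (ζ ^ (j:ℕ)) ^ t • (1 : Module.End ℂ ↥(N j)) := by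
    refine LinearMap.ext fun x => Subtype.ext ?_
    show (f ^ t) (x : V) = _
    have hx' : f ↑x = ζ ^ (j:ℕ) • ↑x := Module.End.mem_eigenspace_iff.mp x.2
    rw [pow_eigen f _ _ hx' t]
    simp only [LinearMap.smul_apply, Module.End.one_apply, SetLike.val_smul]
  rw [hres, map_smul, LinearMap.trace_one, smul_eq_mul, ← pow_mul, mul_comm]

/-- character values of powers -/
lemma chi_pow (m : ℕ) (hm : 0 < m) (ζ : ℂ) (hζ : IsPrimitiveRoot ζ m)
    (S : Submodule (MonoidAlgebra ℂ G) (MonoidAlgebra ℂ G)) (g : G) (hg : g ^ m = 1) :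
    ∃ n : ℕ → ℕ, ∀ t : ℕ,
      chiS S (g ^ t) = ∑ j ∈ Finset.range m, (n j : ℂ) * ζ ^ (j * t) := by
  set f : Module.End ℂ ↥(S.restrictScalars ℂ) := actL S (MonoidAlgebra.single g 1) with hf
  have hfm : f ^ m = 1 := by
    rw [hf, ← actL_pow, MonoidAlgebra.single_pow, one_pow, hg, ← MonoidAlgebra.one_def, actL_one]
  refine ⟨fun j => Module.finrank ℂ ↥(f.eigenspace (ζ ^ j)), fun t => ?_⟩
  have : chiS S (g ^ t) = LinearMap.trace ℂ _ (f ^ t) := by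
    rw [chiS, tauS, LinearMap.comp_apply]
    congr 1
    rw [hf, ← actL_pow, MonoidAlgebra.single_pow, one_pow]
  rw [this, trace_pow m hm ζ hζ f hfm t]


/-! ### Galois action on character sums -/

open IntermediateField in
lemma key_sum (m : ℕ) (hm : 0 < m) (ζ : ℂ) (hζ : IsPrimitiveRoot ζ m)
    (hgm : ∀ g : G, g ^ m = 1)
    (S : Submodule (MonoidAlgebra ℂ G) (MonoidAlgebra ℂ G))
    (σ : ℚ⟮ζ⟯ ≃ₐ[ℚ] ℚ⟮ζ⟯) (t : ℕ)
    (hσ : σ ⟨ζ, IntermediateField.mem_adjoin_simple_self ℚ ζ⟩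
        = ⟨ζ, IntermediateField.mem_adjoin_simple_self ℚ ζ⟩ ^ t)
    (D : Finset G) :
    ∃ x : ℚ⟮ζ⟯, (x : ℂ) = tauS S (∑ g ∈ D, MonoidAlgebra.single g (1:ℂ)) ∧
      ((σ x : ℚ⟮ζ⟯) : ℂ) = ∑ g ∈ D, chiS S (g ^ t) := by
  choose n hn using fun g : G => chi_pow m hm ζ hζ S g (hgm g)
  set ζE : ℚ⟮ζ⟯ := ⟨ζ, IntermediateField.mem_adjoin_simple_self ℚ ζ⟩ with hζE_def
  have htau : tauS S (∑ g ∈ D, MonoidAlgebra.single g (1:ℂ)) = ∑ g ∈ D, chiS S g := by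
    rw [map_sum]; rfl
  refine ⟨∑ g ∈ D, ∑ j ∈ Finset.range m, (n g j : ℚ⟮ζ⟯) * ζE ^ j, ?_, ?_⟩
  · rw [htau]
    have hcoe : ((∑ g ∈ D, ∑ j ∈ Finset.range m, (n g j : ℚ⟮ζ⟯) * ζE ^ j : ℚ⟮ζ⟯) : ℂ)
        = ∑ g ∈ D, ∑ j ∈ Finset.range m, (n g j : ℂ) * ζ ^ j := by
      show (algebraMap ℚ⟮ζ⟯ ℂ) _ = _
      rw [map_sum]
      refine Finset.sum_congr rfl fun g _ => ?_
      rw [map_sum]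
      refine Finset.sum_congr rfl fun j _ => ?_
      rw [map_mul, map_pow, map_natCast]
      rfl
    rw [hcoe]
    refine Finset.sum_congr rfl fun g _ => ?_
    have := hn g 1
    rw [pow_one] at this
    rw [this]
    refine Finset.sum_congr rfl fun j _ => ?_
    rw [mul_one]
  · have hσx : σ (∑ g ∈ D, ∑ j ∈ Finset.range m, (n g j : ℚ⟮ζ⟯) * ζE ^ j)
        = ∑ g ∈ D, ∑ j ∈ Finset.range m, (n g j : ℚ⟮ζ⟯) * (ζE ^ t) ^ j := by
      rw [map_sum]
      refine Finset.sum_congr rfl fun g _ => ?_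
      rw [map_sum]
      refine Finset.sum_congr rfl fun j _ => ?_
      rw [map_mul, map_pow, map_natCast, hσ]
    rw [hσx]
    have hcoe : ((∑ g ∈ D, ∑ j ∈ Finset.range m, (n g j : ℚ⟮ζ⟯) * (ζE ^ t) ^ j : ℚ⟮ζ⟯) : ℂ)
        = ∑ g ∈ D, ∑ j ∈ Finset.range m, (n g j : ℂ) * (ζ ^ t) ^ j := by
      show (algebraMap ℚ⟮ζ⟯ ℂ) _ = _
      rw [map_sum]
      refine Finset.sum_congr rfl fun g _ => ?_
      rw [map_sum]
      refine Finset.sum_congr rfl fun j _ => ?_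
      rw [map_mul, map_pow, map_pow, map_natCast]
      rfl
    rw [hcoe]
    refine Finset.sum_congr rfl fun g _ => ?_
    rw [hn g t]
    refine Finset.sum_congr rfl fun j _ => ?_
    rw [← pow_mul, mul_comm t j]

lemma dim_pos (S : Submodule (MonoidAlgebra ℂ G) (MonoidAlgebra ℂ G))
    (hS : IsSimpleModule (MonoidAlgebra ℂ G) ↥S) :
    0 < Module.finrank ℂ ↥(S.restrictScalars ℂ) := by
  haveI := hS
  haveI : Nontrivial ↥S := IsSimpleModule.nontrivial (MonoidAlgebra ℂ G) ↥S
  obtain ⟨s₀, hs₀⟩ := exists_ne (0 : ↥S)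
  haveI : Nontrivial ↥(S.restrictScalars ℂ) := by
    refine ⟨⟨s₀.1, s₀.2⟩, 0, fun hcon => hs₀ ?_⟩
    exact Subtype.ext (congrArg Subtype.val hcon)
  exact Module.finrank_pos


end CayleyAux

/-- Theorem 2: all eigenvalues of `Cay(G, C)` lie in `K` iff `C` is a union of
`Γ_K`-conjugacy classes. -/
theorem stmt1 {G : Type*} [Group G] [Fintype G] [DecidableEq G] (C : Finset G)
    (hC : ∀ g ∈ C, ∀ h : G, h * g * h⁻¹ ∈ C)
    (ζ : ℂ) (hζ : IsPrimitiveRoot ζ (Monoid.exponent G))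
    (K : IntermediateField ℚ ℂ) (hK : K ≤ ℚ⟮ζ⟯) :
    (∀ μ ∈ spectrum ℂ (cayleyAdj C), μ ∈ K) ↔
      (∀ g ∈ C, ∀ h : G, GammaConj ζ K h g → h ∈ C) := by
  classical
  set m := Monoid.exponent G with hmdef
  have hm : 0 < m := Monoid.exponent_pos_of_exists (Fintype.card G) Fintype.card_pos
      (fun g => pow_card_eq_one)
  haveI : NeZero m := ⟨hm.ne'⟩
  have hgm : ∀ g : G, g ^ m = 1 := fun g => Monoid.pow_exponent_eq_one g
  have hCconj : ∀ k g : G, (k * g * k⁻¹ ∈ C) ↔ (g ∈ C) := by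
    intro k g
    constructor
    · intro h
      have h2 := hC _ h k⁻¹
      have : k⁻¹ * (k * g * k⁻¹) * k⁻¹⁻¹ = g := by group
      rwa [this] at h2
    · intro h; exact hC g h k
  set a : MonoidAlgebra ℂ G := ∑ g ∈ C, MonoidAlgebra.single g (1:ℂ) with ha
  have ha_apply : ∀ u, a.coeff u = if u ∈ C then 1 else 0 := fun u => CayleyAux.sum_single_apply C u
  have ha_central : ∀ y, a * y = y * a := by
    apply CayleyAux.central_of_classfun
    intro k g
    rw [ha_apply, ha_apply]
    by_cases hg : g ∈ C
    · rw [if_pos hg, if_pos ((hCconj k g).mpr hg)]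
    · rw [if_neg hg, if_neg (fun hc => hg ((hCconj k g).mp hc))]
  have hPhi : CayleyAux.Phi a = cayleyAdj C := by
    funext h k
    rw [CayleyAux.Phi_apply, ha_apply]
    rfl
  have hspec_eq : spectrum ℂ (cayleyAdj C) = spectrum ℂ a := by
    rw [← hPhi]
    exact CayleyAux.spectrum_phi a ha_central
  have hζint : IsIntegral ℚ ζ := by
    refine ⟨Polynomial.X ^ m - Polynomial.C 1, Polynomial.monic_X_pow_sub_C 1 hm.ne', ?_⟩
    simp [Polynomial.eval₂_sub, hζ.pow_eq_one]
  haveI : FiniteDimensional ℚ ℚ⟮ζ⟯ := IntermediateField.adjoin.finiteDimensional hζint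
  haveI hGal : IsGalois ℚ ℚ⟮ζ⟯ := by
    have H := IntermediateField.adjoin_simple_toSubalgebra_of_isAlgebraic hζint.isAlgebraic
    have hζ' : IsPrimitiveRoot ζ ((⟨m, hm⟩ : ℕ+) : ℕ) := hζ
    haveI : IsCyclotomicExtension {m} ℚ ℚ⟮ζ⟯ := by
      refine IsCyclotomicExtension.equiv _ _ _ (h := ?_) (.refl : ℚ⟮ζ⟯.toSubalgebra ≃ₐ[ℚ] _)
      rw [H]
      exact hζ'.adjoin_isCyclotomicExtension ℚ
    exact IsCyclotomicExtension.isGalois {m} ℚ ℚ⟮ζ⟯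
  set ζE : ℚ⟮ζ⟯ := ⟨ζ, IntermediateField.mem_adjoin_simple_self ℚ ζ⟩ with hζEdef
  have hζE : IsPrimitiveRoot ζE m := by
    apply IsPrimitiveRoot.of_map_of_injective (f := algebraMap ℚ⟮ζ⟯ ℂ)
    · exact hζ
    · exact (algebraMap ℚ⟮ζ⟯ ℂ).injective
  have hzpow : ∀ s r : ℕ, s ≡ r [MOD m] → ζ ^ s = ζ ^ r := by
    intro s r hsr
    have h1 : ζ ^ s = ζ ^ (s % m) := by
      conv_lhs => rw [← Nat.div_add_mod s m]
      rw [pow_add, pow_mul, hζ.pow_eq_one, one_pow, one_mul]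
    have h2 : ζ ^ r = ζ ^ (r % m) := by
      conv_lhs => rw [← Nat.div_add_mod r m]
      rw [pow_add, pow_mul, hζ.pow_eq_one, one_pow, one_mul]
    rw [h1, h2, show s % m = r % m from hsr]
  have hpow_facts : ∀ t : ℕ, Nat.Coprime t m → ∃ t' : ℕ,
      (∀ g : G, (g ^ t) ^ t' = g) ∧ (∀ g : G, (g ^ t') ^ t = g) ∧ ζE ^ (t * t') = ζE := by
    intro t hcop
    refine ⟨t ^ (Nat.totient m - 1), ?_, ?_, ?_⟩ <;>
    · have htt' : (t * t ^ (Nat.totient m - 1)) ≡ 1 [MOD m] := by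
        have h1 := Nat.ModEq.pow_totient hcop
        have h2 : t * t ^ (Nat.totient m - 1) = t ^ Nat.totient m := by
          rw [← pow_succ']
          congr 1
          have := Nat.totient_pos.mpr hm
          omega
        rw [h2]; exact h1
      first
      | · intro g
          rw [← pow_mul]
          have : g ^ (t * t ^ (Nat.totient m - 1)) = g ^ 1 :=
            pow_eq_pow_iff_modEq.mpr (Nat.ModEq.of_dvd (Monoid.order_dvd_exponent g) htt')
          rw [this, pow_one]
      | · intro g
          rw [← pow_mul, mul_comm]
          have : g ^ (t * t ^ (Nat.totient m - 1)) = g ^ 1 :=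
            pow_eq_pow_iff_modEq.mpr (Nat.ModEq.of_dvd (Monoid.order_dvd_exponent g) htt')
          rw [this, pow_one]
      | · have hc : ζ ^ (t * t ^ (Nat.totient m - 1)) = ζ ^ 1 := hzpow _ 1 htt'
          rw [pow_one] at hc
          exact Subtype.ext ((SubmonoidClass.coe_pow ζE _).trans hc)
  constructor
  · -- eigenvalues in K → Γ_K-closed
    intro hspec g₀ hg₀ h hGC
    obtain ⟨t, ⟨σ, hσK, hσζ⟩, hconj⟩ := hGC
    have hσζE : σ ζE = ζE ^ t :=
      Subtype.ext (hσζ.trans (SubmonoidClass.coe_pow ζE t).symm)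
    have hprim : IsPrimitiveRoot (ζE ^ t) m := by
      rw [← hσζE]
      exact hζE.map_of_injective σ.injective
    have hcop : Nat.Coprime t m := (hζE.pow_iff_coprime hm t).mp hprim
    obtain ⟨t', hpow1, hpow2, hζtt'⟩ := hpow_facts t hcop
    set D : Finset G := Finset.univ.filter (fun g => g ^ t ∈ C) with hD
    have hmemD : ∀ u : G, u ∈ D ↔ u ^ t ∈ C := by
      intro u; simp [hD]
    set b : MonoidAlgebra ℂ G := ∑ g ∈ D, MonoidAlgebra.single g (1:ℂ) with hb
    have hb_apply : ∀ u, b.coeff u = if u ∈ D then 1 else 0 := fun u => CayleyAux.sum_single_apply D u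
    have hb_central : ∀ y, b * y = y * b := by
      apply CayleyAux.central_of_classfun
      intro k g
      rw [hb_apply, hb_apply]
      have hiff : (k * g * k⁻¹) ∈ D ↔ g ∈ D := by
        rw [hmemD, hmemD, conj_pow, hCconj]
      by_cases hg : g ∈ D
      · rw [if_pos hg, if_pos (hiff.mpr hg)]
      · rw [if_neg hg, if_neg (fun hc => hg (hiff.mp hc))]
    have hinj : ∀ x ∈ D, ∀ y ∈ D, x ^ t = y ^ t → x = y := by
      intro x _ y _ hxy
      have h2 := congrArg (fun z : G => z ^ t') hxy
      simpa [hpow1 x, hpow1 y] using h2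
    have himg : D.image (fun g => g ^ t) = C := by
      ext c
      simp only [Finset.mem_image]
      constructor
      · rintro ⟨g, hgD, rfl⟩; exact (hmemD g).mp hgD
      · intro hc
        exact ⟨c ^ t', (hmemD _).mpr (by rw [hpow2 c]; exact hc), hpow2 c⟩
    have hba : b = a := by
      have hz : ∀ T : Submodule (MonoidAlgebra ℂ G) (MonoidAlgebra ℂ G),
          IsSimpleModule (MonoidAlgebra ℂ G) ↥T → ∀ s ∈ T, (b - a) * s = 0 := by
        intro T hT s hs
        obtain ⟨μa, hμa⟩ := CayleyAux.exists_scalar T hT a ha_central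
        obtain ⟨μb, hμb⟩ := CayleyAux.exists_scalar T hT b hb_central
        have hdim := CayleyAux.dim_pos T hT
        set d : ℕ := Module.finrank ℂ ↥(T.restrictScalars ℂ) with hd
        have hd0 : (d:ℂ) ≠ 0 := Nat.cast_ne_zero.mpr hdim.ne'
        have hμaK : μa ∈ K := by
          apply hspec
          rw [hspec_eq]
          exact CayleyAux.mem_spectrum_of_scalar T hT a μa hμa
        obtain ⟨x, hx1, hx2⟩ := CayleyAux.key_sum m hm ζ hζ hgm T σ t hσζE D
        rw [← hb] at hx1
        have htb : CayleyAux.tauS T b = μb * d := CayleyAux.tau_of_scalar T b μb hμb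
        have hta : CayleyAux.tauS T a = μa * d := CayleyAux.tau_of_scalar T a μa hμa
        have hsum_img : ∑ g ∈ D, CayleyAux.chiS T (g ^ t) = CayleyAux.tauS T a := by
          rw [← Finset.sum_image hinj, himg, ha, map_sum]
          rfl
        have hσxK : ((σ x : ℚ⟮ζ⟯) : ℂ) ∈ K := by
          rw [hx2, hsum_img, hta]
          exact K.mul_mem hμaK (IntermediateField.natCast_mem K d)
        have hfix : σ (σ x) = σ x := by
          have h0 := hσK ((σ x : ℚ⟮ζ⟯) : ℂ) (σ x).2 hσxK
          exact Subtype.ext h0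
        have hxfix : σ x = x := σ.injective hfix
        have heq : μb * d = μa * d := by
          rw [← htb, ← hx1, ← hxfix, hx2, hsum_img, hta]
        have hμba : μb = μa := mul_right_cancel₀ hd0 heq
        rw [sub_mul, hμa s hs, hμb s hs, hμba, sub_self]
      have hz0 : b - a = 0 := by
        set z := b - a with hzdef
        have hzc : ∀ r : MonoidAlgebra ℂ G, z * r = r * z := fun r => by
          rw [hzdef, sub_mul, mul_sub, ha_central r, hb_central r]
        set f : MonoidAlgebra ℂ G →ₗ[MonoidAlgebra ℂ G] MonoidAlgebra ℂ G :=
          { toFun := fun r => z * r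
            map_add' := mul_add z
            map_smul' := fun r x => by
              simp only [smul_eq_mul, RingHom.id_apply, ← mul_assoc, hzc r] } with hf
        have hker : ∀ T ∈ {mo : Submodule (MonoidAlgebra ℂ G) (MonoidAlgebra ℂ G) |
            IsSimpleModule (MonoidAlgebra ℂ G) ↥mo}, T ≤ LinearMap.ker f := by
          intro T hT s hs
          have := hz T hT s hs
          exact LinearMap.mem_ker.mpr this
        have htop : (⊤ : Submodule (MonoidAlgebra ℂ G) (MonoidAlgebra ℂ G)) ≤ LinearMap.ker f := by
          rw [← IsSemisimpleModule.sSup_simples_eq_top (MonoidAlgebra ℂ G) (MonoidAlgebra ℂ G)]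
          exact sSup_le hker
        have h1 : z * 1 = 0 := htop Submodule.mem_top
        rwa [mul_one] at h1
      exact sub_eq_zero.mp hz0
    have hcoeff : (if g₀ ∈ D then (1:ℂ) else 0) = (if g₀ ∈ C then (1:ℂ) else 0) := by
      rw [← hb_apply, ← ha_apply, hba]
    rw [if_pos hg₀] at hcoeff
    have hg₀D : g₀ ∈ D := by
      by_contra hnot
      rw [if_neg hnot] at hcoeff
      exact zero_ne_one hcoeff
    have hg₀t : g₀ ^ t ∈ C := (hmemD g₀).mp hg₀D
    obtain ⟨c, hc⟩ := isConj_iff.mp hconj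
    have hh : h = c⁻¹ * (g₀ ^ t) * c := by rw [← hc]; group
    rw [hh]
    have h2 := hC (g₀ ^ t) hg₀t c⁻¹
    rwa [inv_inv] at h2
  · -- Γ_K-closed → eigenvalues in K
    intro hcl μ hμ
    rw [hspec_eq, spectrum.mem_iff] at hμ
    have hcen : ∀ y, (algebraMap ℂ (MonoidAlgebra ℂ G) μ - a) * y
        = y * (algebraMap ℂ (MonoidAlgebra ℂ G) μ - a) := by
      intro y
      rw [sub_mul, mul_sub, ha_central y, Algebra.commutes]
    obtain ⟨T, hT, hkill⟩ := CayleyAux.exists_simple_of_nonunit _ hcen hμ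
    have hscal : ∀ s ∈ T, a * s = μ • s := by
      intro s hs
      have h0 := hkill s hs
      rw [sub_mul] at h0
      rw [Algebra.smul_def]
      exact (sub_eq_zero.mp h0).symm
    have hdim := CayleyAux.dim_pos T hT
    set d : ℕ := Module.finrank ℂ ↥(T.restrictScalars ℂ) with hd
    have hd0 : (d:ℂ) ≠ 0 := Nat.cast_ne_zero.mpr hdim.ne'
    have hta : CayleyAux.tauS T a = μ * d := CayleyAux.tau_of_scalar T a μ hscal
    set K' : IntermediateField ℚ ℚ⟮ζ⟯ := IntermediateField.comap ℚ⟮ζ⟯.val K with hK'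
    obtain ⟨x₀, hx₀, -⟩ := CayleyAux.key_sum m hm ζ hζ hgm T (AlgEquiv.refl) 1
      (by rw [pow_one]; rfl) C
    rw [← ha] at hx₀
    set μE : ℚ⟮ζ⟯ := x₀ * ((d : ℚ⟮ζ⟯))⁻¹ with hμE
    have hμEc : (μE : ℂ) = μ := by
      show (algebraMap ℚ⟮ζ⟯ ℂ) μE = μ
      rw [hμE, map_mul, map_inv₀, map_natCast]
      rw [show (algebraMap ℚ⟮ζ⟯ ℂ) x₀ = (x₀ : ℂ) from rfl, hx₀, hta]
      field_simp
    have hfixed : μE ∈ IntermediateField.fixedField (IntermediateField.fixingSubgroup K') := by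
      refine fun gσ => ?_
      set σ' : ℚ⟮ζ⟯ ≃ₐ[ℚ] ℚ⟮ζ⟯ := gσ.1 with hσ'def
      have hσ'fix : ∀ y ∈ K', σ' y = y := (IntermediateField.mem_fixingSubgroup_iff K' σ').mp gσ.2
      have hpow1 : (σ' ζE) ^ m = 1 := by rw [← map_pow, hζE.pow_eq_one, map_one]
      obtain ⟨j, hjm, hj⟩ := hζE.eq_pow_of_pow_eq_one hpow1
      have hσ'ζE : σ' ζE = ζE ^ j := hj.symm
      have hprim : IsPrimitiveRoot (ζE ^ j) m := by
        rw [← hσ'ζE]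
        exact hζE.map_of_injective σ'.injective
      have hcop : Nat.Coprime j m := (hζE.pow_iff_coprime hm j).mp hprim
      obtain ⟨j', hp1, hp2, hζjj'⟩ := hpow_facts j hcop
      have hGj : GammaK ζ K j := by
        refine ⟨σ', ?_, ?_⟩
        · intro xx hxx hxK
          have hmem : (⟨xx, hxx⟩ : ℚ⟮ζ⟯) ∈ K' := hxK
          have h2 := hσ'fix _ hmem
          exact congrArg Subtype.val h2
        · exact (congrArg Subtype.val hσ'ζE).trans (SubmonoidClass.coe_pow ζE j)
      have hGj' : GammaK ζ K j' := by
        have hσ'symmζE : σ'.symm ζE = ζE ^ j' := by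
          have hstep : σ' (ζE ^ j') = ζE := by
            rw [map_pow, hσ'ζE, ← pow_mul, hζjj']
          have h4 := congrArg σ'.symm hstep
          rw [AlgEquiv.symm_apply_apply] at h4
          exact h4.symm
        refine ⟨σ'.symm, ?_, ?_⟩
        · intro xx hxx hxK
          have hmem : (⟨xx, hxx⟩ : ℚ⟮ζ⟯) ∈ K' := hxK
          have h2 := hσ'fix _ hmem
          have h3 : σ'.symm ⟨xx, hxx⟩ = ⟨xx, hxx⟩ := by
            conv_lhs => rw [← h2]
            rw [AlgEquiv.symm_apply_apply]
          exact congrArg Subtype.val h3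
        · exact (congrArg Subtype.val hσ'symmζE).trans (SubmonoidClass.coe_pow ζE j')
      have hCj : ∀ g : G, g ∈ C → g ^ j ∈ C := fun g hg =>
        hcl g hg (g ^ j) ⟨j, hGj, IsConj.refl _⟩
      have hCj' : ∀ g : G, g ∈ C → g ^ j' ∈ C := fun g hg =>
        hcl g hg (g ^ j') ⟨j', hGj', IsConj.refl _⟩
      have hinj : ∀ x ∈ C, ∀ y ∈ C, x ^ j = y ^ j → x = y := by
        intro x _ y _ hxy
        have h2 := congrArg (fun z : G => z ^ j') hxy
        simpa [hp1 x, hp1 y] using h2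
      have himg : C.image (fun g => g ^ j) = C := by
        ext c
        simp only [Finset.mem_image]
        constructor
        · rintro ⟨g, hgC, rfl⟩; exact hCj g hgC
        · intro hc; exact ⟨c ^ j', hCj' c hc, hp2 c⟩
      obtain ⟨x, hx1, hx2⟩ := CayleyAux.key_sum m hm ζ hζ hgm T σ' j hσ'ζE C
      rw [← ha] at hx1
      have hsum : ∑ g ∈ C, CayleyAux.chiS T (g ^ j) = CayleyAux.tauS T a := by
        rw [← Finset.sum_image hinj, himg, ha, map_sum]
        rfl
      have hσ'x : σ' x = x := by
        apply Subtype.ext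
        rw [show ((σ' x : ℚ⟮ζ⟯) : ℂ) = ((σ' x : ℚ⟮ζ⟯) : ℂ) from rfl]
        exact hx2.trans (hsum.trans hx1.symm)
      have hx₀x : x₀ = x := Subtype.ext (hx₀.trans hx1.symm)
      show σ' μE = μE
      rw [hμE, map_mul, map_inv₀, map_natCast, hx₀x, hσ'x]
    have hμEK' : μE ∈ K' := by
      rw [← IsGalois.fixedField_fixingSubgroup K']
      exact hfixed
    have hfin : (μE : ℂ) ∈ K := hμEK'
    rwa [hμEc] at hfin
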